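/- A subspace E of a real Banach lattice X does phase retrieval (|f| = |g| for f,g ∈ E implies f = g or f = -g) if and only if E contains no pair of nonzero disjoint vectors (f, g ∈ E nonzero with |f| ∧ |g| = 0). -/

import Mathlib

theorem key_abs_inf {X : Type*} [Lattice X] [AddCommGroup X]
    [CovariantClass X X (· + ·) (· ≤ ·)] (f g : X) :
    |f + g| ⊓ |f - g| = |(|f| - |g|)| := by
  letI : DistribLattice X := AddCommGroup.toDistribLattice X
  have h1 : (f + g) ⊓ (f - g) = f - |g| := by
    rw [show f + g = f + g from rfl, show f - g = f + (-g) by abel, ← add_inf,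
      show g ⊓ (-g) = -|g| by rw [abs, neg_sup, neg_neg, inf_comm]]
    abel
  have h2 : (f + g) ⊓ (-f + g) = g - |f| := by
    rw [show f + g = g + f by abel, show -f + g = g + (-f) by abel, ← add_inf,
      show f ⊓ (-f) = -|f| by rw [abs, neg_sup, neg_neg, inf_comm]]
    abel
  have h3 : (-f - g) ⊓ (f - g) = -g - |f| := by
    rw [show -f - g = -g + (-f) by abel, show f - g = -g + f by abel, ← add_inf,
      show (-f) ⊓ f = -|f| by rw [abs, neg_sup, neg_neg]]
    abel
  have h4 : (-f - g) ⊓ (-f + g) = -f - |g| := by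
    rw [show -f - g = -f + (-g) by abel, ← add_inf,
      show (-g) ⊓ g = -|g| by rw [abs, neg_sup, neg_neg]]
    abel
  have e1 : |f + g| = (f + g) ⊔ (-f - g) := by rw [abs]; congr 1; abel
  have e2 : |f - g| = (f - g) ⊔ (-f + g) := by rw [abs]; congr 1; abel
  rw [e1, e2, inf_sup_right, inf_sup_left, inf_sup_left, h1, h2, h3, h4,
    sup_comm (-g - |f|) (-f - |g|), sup_sup_sup_comm, ← sup_sub, ← sup_sub]
  rw [show f ⊔ -f = |f| from rfl, show g ⊔ -g = |g| from rfl,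
    show |(|f| - |g|)| = (|f| - |g|) ⊔ -(|f| - |g|) from rfl, neg_sub]

theorem key_abs_sup {X : Type*} [Lattice X] [AddCommGroup X]
    [CovariantClass X X (· + ·) (· ≤ ·)] (f g : X) :
    |f + g| ⊔ |f - g| = |f| + |g| := by
  have e1 : |f + g| = (f + g) ⊔ (-f - g) := by rw [abs]; congr 1; abel
  have e2 : |f - g| = (f - g) ⊔ (-f + g) := by rw [abs]; congr 1; abel
  rw [e1, e2, sup_sup_sup_comm,
    show f + g = f + g from rfl, show f - g = f + (-g) by abel, ← add_sup,
    show -f - g = -f + (-g) by abel, ← add_sup, sup_comm (-g) g,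
    show g ⊔ -g = |g| from rfl, ← sup_add, show f ⊔ -f = |f| from rfl]

/-- A subspace of a real Banach lattice does phase retrieval if and only if it contains
no pair of nonzero disjoint vectors. -/
theorem phaseRetrieval_iff_no_disjoint_pair {X : Type*} [NormedAddCommGroup X] [Lattice X]
    [IsOrderedAddMonoid X] [HasSolidNorm X]
    [NormedSpace ℝ X] (E : Submodule ℝ X) :
    (∀ f ∈ E, ∀ g ∈ E, |f| = |g| → f = g ∨ f = -g) ↔
      ¬ ∃ f ∈ E, ∃ g ∈ E, f ≠ 0 ∧ g ≠ 0 ∧ |f| ⊓ |g| = 0 := by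
  constructor
  · intro PR ⟨f, hf, g, hg, hf0, hg0, hdisj⟩
    have hinf := key_abs_inf f g
    have hsup := key_abs_sup f g
    have habs : |(|f| - |g|)| = |g| ⊔ |f| := by
      rw [← sup_sub_inf_eq_abs_sub, inf_comm, hdisj, sub_zero]
    have hadd : |f| + |g| = |f| ⊔ |g| := by
      rw [← inf_add_sup, hdisj, zero_add]
    have heq : |f + g| = |f - g| := by
      apply le_antisymm
      · calc |f + g| ≤ |f + g| ⊔ |f - g| := le_sup_left
          _ = |f + g| ⊓ |f - g| := by rw [hsup, hinf, habs, hadd, sup_comm]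
          _ ≤ |f - g| := inf_le_right
      · calc |f - g| ≤ |f + g| ⊔ |f - g| := le_sup_right
          _ = |f + g| ⊓ |f - g| := by rw [hsup, hinf, habs, hadd, sup_comm]
          _ ≤ |f + g| := inf_le_left
    rcases PR (f + g) (E.add_mem hf hg) (f - g) (E.sub_mem hf hg) heq with h | h
    · apply hg0
      have : g + g = 0 := by
        have := sub_eq_zero.mpr h; rw [show f + g - (f - g) = g + g by abel] at this
        exact this
      have h2 : (2 : ℝ) • g = 0 := by rw [two_smul]; exact this
      simpa using (smul_eq_zero.mp h2).resolve_left (by norm_num)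
    · apply hf0
      have : f + f = 0 := by
        have : f + g + (f - g) = 0 := by rw [h]; abel
        rw [show f + g + (f - g) = f + f by abel] at this
        exact this
      have h2 : (2 : ℝ) • f = 0 := by rw [two_smul]; exact this
      simpa using (smul_eq_zero.mp h2).resolve_left (by norm_num)
  · intro h f hf g hg habs
    have hdisj : |f + g| ⊓ |f - g| = 0 := by
      rw [key_abs_inf, habs, sub_self, abs_zero]
    by_cases h1 : f - g = 0
    · exact Or.inl (sub_eq_zero.mp h1)
    by_cases h2 : f + g = 0
    · exact Or.inr (eq_neg_of_add_eq_zero_left h2)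
    exact absurd ⟨f + g, E.add_mem hf hg, f - g, E.sub_mem hf hg, h2, h1, hdisj⟩ h
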